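/- Let a ∈ (ℤ/2)^d be nonzero, y ∈ (ℤ/2)^r nonzero, n_1,…,n_d ≥ 3 with h = gcd(n_1,…,n_d) even. Let B = (A_{K_{n_1}}^{a_1} ⊗ ⋯ ⊗ A_{K_{n_d}}^{a_d}) ⊗ (A_{K_2}^{y_1} ⊗ ⋯ ⊗ A_{K_2}^{y_r}). Then exp(-πi·B) = -I. -/

import Mathlib

open Kronecker

/-- Adjacency matrix of the complete graph `K_n`, as a complex matrix. -/
noncomputable def Kadj (n : ℕ) : Matrix (Fin n) (Fin n) ℂ :=
  Matrix.of fun i j => if i = j then 0 else 1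

/-- Adjacency matrix of `K_2`, indexed by `ZMod 2`. -/
noncomputable def A2 : Matrix (ZMod 2) (ZMod 2) ℂ :=
  Matrix.of fun i j => if i = j then 0 else 1

/-- Kronecker product of a family of matrices. -/
noncomputable def kronC {d : ℕ} {n : Fin d → ℕ}
    (M : ∀ i, Matrix (Fin (n i)) (Fin (n i)) ℂ) :
    Matrix (∀ i, Fin (n i)) (∀ i, Fin (n i)) ℂ :=
  Matrix.of fun u v => ∏ i, M i (u i) (v i)

/-- `M_a = A_{K_2}^{a_1} ⊗ ⋯ ⊗ A_{K_2}^{a_r}` for `a ∈ (ℤ/2)^r`. -/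
noncomputable def cube {r : ℕ} (a : Fin r → ZMod 2) :
    Matrix (Fin r → ZMod 2) (Fin r → ZMod 2) ℂ :=
  Matrix.of fun u v => ∏ j, (if a j = 1 then A2 else 1) (u j) (v j)

/-- `A_{K_{n_1}}^{a_1} ⊗ ⋯ ⊗ A_{K_{n_d}}^{a_d}`. -/
noncomputable def compKron {d : ℕ} (n : Fin d → ℕ) (a : Fin d → ZMod 2) :
    Matrix (∀ i, Fin (n i)) (∀ i, Fin (n i)) ℂ :=
  kronC fun i => if a i = 1 then Kadj (n i) else 1

/-- Hamming weight. -/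
def wt {m : ℕ} (a : Fin m → ZMod 2) : ℕ :=
  (Finset.univ.filter fun i => a i = 1).card


section Aux

open Matrix

/-- General Kronecker product of a family of complex matrices. -/
noncomputable def gk {ι : Type*} [Fintype ι] {κ : ι → Type*} [∀ i, Fintype (κ i)]
    (M : ∀ i, Matrix (κ i) (κ i) ℂ) : Matrix (∀ i, κ i) (∀ i, κ i) ℂ :=
  Matrix.of fun u v => ∏ i, M i (u i) (v i)

variable {ι : Type*} [Fintype ι] [DecidableEq ι] {κ : ι → Type*} [∀ i, Fintype (κ i)]
  [∀ i, DecidableEq (κ i)]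

lemma gk_mul (M N : ∀ i, Matrix (κ i) (κ i) ℂ) :
    gk M * gk N = gk (fun i => M i * N i) := by
  ext u v
  simp only [gk, Matrix.mul_apply, Matrix.of_apply]
  rw [Fintype.prod_sum (f := fun i x => M i (u i) x * N i x (v i))]
  exact Finset.sum_congr rfl fun w _ => Finset.prod_mul_distrib.symm

lemma gk_diagonal (f : ∀ i, κ i → ℂ) :
    gk (fun i => Matrix.diagonal (f i)) = Matrix.diagonal (fun u => ∏ i, f i (u i)) := by
  ext u v
  by_cases h : u = v
  · subst h
    simp [gk, Matrix.diagonal_apply_eq]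
  · obtain ⟨i, hi⟩ := Function.ne_iff.mp h
    rw [Matrix.diagonal_apply_ne _ h]
    exact Finset.prod_eq_zero (Finset.mem_univ i) (Matrix.diagonal_apply_ne _ hi)

lemma gk_one : gk (fun i => (1 : Matrix (κ i) (κ i) ℂ)) = 1 := by
  have : (fun i => (1 : Matrix (κ i) (κ i) ℂ))
      = fun i => Matrix.diagonal (fun _ : κ i => (1 : ℂ)) := by
    funext i; rw [Matrix.diagonal_one]
  rw [this, gk_diagonal]
  simp

/-- `M` is conjugate (by an explicit invertible matrix) to a diagonal matrix
all of whose diagonal values are odd integers. -/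
def HasOddDiag {κ : Type*} [Fintype κ] [DecidableEq κ] (M : Matrix κ κ ℂ) : Prop :=
  ∃ P Q : Matrix κ κ ℂ, ∃ f : κ → ℂ, P * Q = 1 ∧ Q * P = 1 ∧
    M = P * Matrix.diagonal f * Q ∧ ∀ x, ∃ m : ℤ, Odd m ∧ f x = (m : ℂ)

lemma hasOddDiag_one {κ : Type*} [Fintype κ] [DecidableEq κ] :
    HasOddDiag (1 : Matrix κ κ ℂ) :=
  ⟨1, 1, fun _ => 1, one_mul 1, one_mul 1, by simp, fun _ => ⟨1, odd_one, by norm_num⟩⟩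

lemma hasOddDiag_gk (M : ∀ i, Matrix (κ i) (κ i) ℂ)
    (h : ∀ i, HasOddDiag (M i)) : HasOddDiag (gk M) := by
  choose P Q f hPQ hQP hM hf using h
  refine ⟨gk P, gk Q, fun u => ∏ i, f i (u i), ?_, ?_, ?_, ?_⟩
  · rw [gk_mul, show (fun i => P i * Q i) = fun i => (1 : Matrix (κ i) (κ i) ℂ) from
      funext hPQ, gk_one]
  · rw [gk_mul, show (fun i => Q i * P i) = fun i => (1 : Matrix (κ i) (κ i) ℂ) from
      funext hQP, gk_one]
  · rw [← gk_diagonal, gk_mul, gk_mul]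
    exact congrArg gk (funext hM)
  · intro u
    refine Finset.prod_induction _ (fun z => ∃ m : ℤ, Odd m ∧ z = (m : ℂ)) ?_
      ⟨1, odd_one, by norm_num⟩ (fun i _ => hf i (u i))
    rintro x y ⟨m, hm, rfl⟩ ⟨m', hm', rfl⟩
    exact ⟨m * m', hm.mul hm', by push_cast; ring⟩

lemma hasOddDiag_kron {κ₁ κ₂ : Type*} [Fintype κ₁] [DecidableEq κ₁] [Fintype κ₂]
    [DecidableEq κ₂] {M : Matrix κ₁ κ₁ ℂ} {N : Matrix κ₂ κ₂ ℂ}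
    (hM : HasOddDiag M) (hN : HasOddDiag N) : HasOddDiag (M ⊗ₖ N) := by
  obtain ⟨P, Q, f, h1, h2, h3, h4⟩ := hM
  obtain ⟨P', Q', f', h1', h2', h3', h4'⟩ := hN
  refine ⟨P ⊗ₖ P', Q ⊗ₖ Q', fun x => f x.1 * f' x.2, ?_, ?_, ?_, ?_⟩
  · rw [← Matrix.mul_kronecker_mul, h1, h1', Matrix.one_kronecker_one]
  · rw [← Matrix.mul_kronecker_mul, h2, h2', Matrix.one_kronecker_one]
  · rw [h3, h3', Matrix.mul_kronecker_mul, Matrix.mul_kronecker_mul,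
      Matrix.diagonal_kronecker_diagonal]
  · rintro ⟨x₁, x₂⟩
    obtain ⟨m, hm, hx⟩ := h4 x₁
    obtain ⟨m', hm', hx'⟩ := h4' x₂
    refine ⟨m * m', hm.mul hm', ?_⟩
    show f x₁ * f' x₂ = ((m * m' : ℤ) : ℂ)
    rw [hx, hx']; push_cast; ring

lemma exp_odd_int (m : ℤ) (hm : Odd m) :
    NormedSpace.exp (-Complex.I * ((Real.pi : ℝ) : ℂ) * (m : ℂ)) = -1 := by
  rw [← Complex.exp_eq_exp_ℂ]
  have h : -Complex.I * ((Real.pi : ℝ) : ℂ) * (m : ℂ)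
      = ((-m : ℤ) : ℂ) * ((Real.pi : ℝ) * Complex.I) := by push_cast; ring
  rw [h, Complex.exp_int_mul, Complex.exp_pi_mul_I]
  exact Odd.neg_one_zpow hm.neg

lemma exp_eq_neg_one_of_hasOddDiag {κ : Type*} [Fintype κ] [DecidableEq κ]
    (M : Matrix κ κ ℂ) (h : HasOddDiag M) :
    NormedSpace.exp ((-Complex.I * ((Real.pi : ℝ) : ℂ)) • M) = -1 := by
  obtain ⟨P, Q, f, hPQ, hQP, hM, hf⟩ := h
  set c : ℂ := -Complex.I * ((Real.pi : ℝ) : ℂ) with hc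
  let U : (Matrix κ κ ℂ)ˣ := ⟨P, Q, hPQ, hQP⟩
  have hdiag : c • M = (U : Matrix κ κ ℂ) * Matrix.diagonal (fun x => c * f x)
      * ((U⁻¹ : (Matrix κ κ ℂ)ˣ) : Matrix κ κ ℂ) := by
    have : Matrix.diagonal (fun x => c * f x) = c • Matrix.diagonal f := by
      rw [← Matrix.diagonal_smul]; rfl
    rw [hM, this]
    show c • (P * Matrix.diagonal f * Q) = P * (c • Matrix.diagonal f) * Q
    rw [mul_assoc, mul_smul_comm, smul_mul_assoc, mul_assoc]
  rw [hdiag, Matrix.exp_units_conj, Matrix.exp_diagonal]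
  have hg : NormedSpace.exp (fun x => c * f x) = fun _ : κ => (-1 : ℂ) := by
    funext x
    rw [Pi.coe_exp]
    obtain ⟨m, hm, hfx⟩ := hf x
    rw [hfx]
    exact exp_odd_int m hm
  rw [hg]
  have hdneg : Matrix.diagonal (fun _ : κ => (-1 : ℂ)) = -1 := by
    rw [show Matrix.diagonal (fun _ : κ => (-1 : ℂ))
        = -Matrix.diagonal (fun _ : κ => (1 : ℂ)) from Matrix.diagonal_neg _ |>.symm,
      Matrix.diagonal_one]
  rw [hdneg, mul_neg_one, neg_mul]
  rw [U.mul_inv]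

end Aux

section KadjDiag

variable {N : ℕ}

noncomputable def Pm (z : Fin N) : Matrix (Fin N) (Fin N) ℂ :=
  Matrix.of fun j k =>
    if k = z then 1 else (if j = z then (1 : ℂ) else 0) - (if j = k then 1 else 0)

noncomputable def Qm (z : Fin N) : Matrix (Fin N) (Fin N) ℂ :=
  Matrix.of fun k j => (N : ℂ)⁻¹ - (if k = z then 0 else if j = k then 1 else 0)

lemma QP (z : Fin N) : Qm z * Pm z = 1 := by
  have hN : (N : ℂ) ≠ 0 := by
    have : 0 < N := z.pos
    exact_mod_cast this.ne'
  ext k l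
  rw [Matrix.mul_apply, Matrix.one_apply]
  by_cases hl : l = z
  · have hP : ∀ j, Pm z j l = 1 := fun j => by simp [Pm, hl]
    simp only [hP, mul_one, Qm, Matrix.of_apply]
    by_cases hk : k = z
    · simp only [if_pos hk, sub_zero]
      rw [Finset.sum_const, Finset.card_univ, Fintype.card_fin, nsmul_eq_mul,
        mul_inv_cancel₀ hN, if_pos (hk.trans hl.symm)]
    · simp only [if_neg hk]
      rw [Finset.sum_sub_distrib, Finset.sum_const, Finset.card_univ, Fintype.card_fin,
        nsmul_eq_mul, mul_inv_cancel₀ hN,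
        Finset.sum_ite_eq' Finset.univ k (fun _ => (1:ℂ)),
        if_neg (show ¬ k = l from fun h => hk (h.trans hl))]
      simp
  · have hP : ∀ j, Pm z j l = (if j = z then (1:ℂ) else 0) - (if j = l then 1 else 0) :=
      fun j => by simp only [Pm, Matrix.of_apply, if_neg hl]
    simp only [hP, mul_sub, mul_ite, mul_one, mul_zero]
    rw [Finset.sum_sub_distrib,
      Finset.sum_ite_eq' Finset.univ z (fun j => Qm z k j),
      Finset.sum_ite_eq' Finset.univ l (fun j => Qm z k j)]
    simp only [Finset.mem_univ, if_true]
    have hQz : Qm z k z = (N : ℂ)⁻¹ := by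
      simp only [Qm, Matrix.of_apply]
      by_cases hk : k = z
      · rw [if_pos hk]; ring
      · rw [if_neg hk, if_neg (show ¬ z = k from Ne.symm hk)]; ring
    have hQl : Qm z k l = (N : ℂ)⁻¹ - (if k = z then 0 else if l = k then 1 else 0) := rfl
    rw [hQz, hQl]
    by_cases hk : k = z
    · rw [if_pos hk, if_neg (show ¬ k = l from fun h => hl (h.symm.trans hk))]
      ring
    · rw [if_neg hk]
      by_cases hkl : k = l
      · rw [if_pos hkl, if_pos hkl.symm]; ring
      · rw [if_neg hkl, if_neg (Ne.symm hkl)]; ring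

lemma PQ (z : Fin N) : Pm z * Qm z = 1 := mul_eq_one_comm.mpr (QP z)

lemma KP (z : Fin N) :
    Kadj N * Pm z = Pm z * Matrix.diagonal (fun k => if k = z then (N : ℂ) - 1 else -1) := by
  ext j l
  rw [Matrix.mul_apply, Matrix.mul_diagonal]
  have hsummand : ∀ k, Kadj N j k * Pm z k l
      = Pm z k l - (if j = k then (1:ℂ) else 0) * Pm z k l := by
    intro k
    simp only [Kadj, Matrix.of_apply]
    by_cases h : j = k <;> simp [h]
  simp only [hsummand, ite_mul, one_mul, zero_mul]
  rw [Finset.sum_sub_distrib, Finset.sum_ite_eq Finset.univ j (fun k => Pm z k l)]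
  simp only [Finset.mem_univ, if_true]
  by_cases hl : l = z
  · have h1 : ∀ k : Fin N, Pm z k l = 1 := fun k => by simp [Pm, hl]
    simp only [h1]
    rw [if_pos hl, Finset.sum_const, Finset.card_univ, Fintype.card_fin, nsmul_eq_mul, mul_one]
    ring
  · have h1 : ∀ k : Fin N, Pm z k l
        = (if k = z then (1:ℂ) else 0) - (if k = l then 1 else 0) :=
      fun k => by simp only [Pm, Matrix.of_apply, if_neg hl]
    simp only [h1]
    rw [if_neg hl, Finset.sum_sub_distrib,
      Finset.sum_ite_eq' Finset.univ z (fun _ => (1:ℂ)),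
      Finset.sum_ite_eq' Finset.univ l (fun _ => (1:ℂ))]
    simp only [Finset.mem_univ, if_true]
    ring

lemma hasOddDiag_Kadj (hN : 0 < N) (hev : Even N) : HasOddDiag (Kadj N) := by
  refine ⟨Pm ⟨0, hN⟩, Qm ⟨0, hN⟩,
    fun k => if k = (⟨0, hN⟩ : Fin N) then (N : ℂ) - 1 else -1, PQ _, QP _, ?_, ?_⟩
  · calc Kadj N = Kadj N * (Pm ⟨0, hN⟩ * Qm ⟨0, hN⟩) := by rw [PQ, mul_one]
      _ = (Kadj N * Pm ⟨0, hN⟩) * Qm ⟨0, hN⟩ := by rw [mul_assoc]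
      _ = Pm ⟨0, hN⟩ * Matrix.diagonal
            (fun k => if k = (⟨0, hN⟩ : Fin N) then (N : ℂ) - 1 else -1) * Qm ⟨0, hN⟩ := by
          rw [KP]
  · intro x
    by_cases hx : x = (⟨0, hN⟩ : Fin N)
    · refine ⟨(N : ℤ) - 1, (Int.even_coe_nat N |>.mpr hev).sub_odd odd_one, ?_⟩
      show (if x = (⟨0, hN⟩ : Fin N) then (N : ℂ) - 1 else -1) = ((N : ℤ) - 1 : ℤ)
      rw [if_pos hx]; push_cast; ring
    · refine ⟨-1, ⟨-1, by ring⟩, ?_⟩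
      show (if x = (⟨0, hN⟩ : Fin N) then (N : ℂ) - 1 else -1) = ((-1 : ℤ) : ℂ)
      rw [if_neg hx]; norm_num

end KadjDiag

section A2Diag

noncomputable def Hm : Matrix (ZMod 2) (ZMod 2) ℂ :=
  Matrix.of fun i j => if i = 1 ∧ j = 1 then -1 else 1

lemma univ_zmod2 : (Finset.univ : Finset (ZMod 2)) = {0, 1} := by decide

lemma hasOddDiag_A2 : HasOddDiag A2 := by
  refine ⟨Hm, (2:ℂ)⁻¹ • Hm, fun j => if j = 1 then -1 else 1, ?_, ?_, ?_, ?_⟩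
  · ext i j
    rw [Matrix.mul_apply, univ_zmod2, Finset.sum_insert (by decide), Finset.sum_singleton]
    rcases (show ∀ x : ZMod 2, x = 0 ∨ x = 1 by decide) i with rfl | rfl <;>
      rcases (show ∀ x : ZMod 2, x = 0 ∨ x = 1 by decide) j with rfl | rfl <;>
      simp [Hm, Matrix.one_apply, Matrix.smul_apply, Matrix.of_apply,
        show (0 : ZMod 2) ≠ 1 by decide, show ¬(1 : ZMod 2) = 0 by decide] <;>
      norm_num
  · ext i j
    rw [Matrix.mul_apply, univ_zmod2, Finset.sum_insert (by decide), Finset.sum_singleton]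
    rcases (show ∀ x : ZMod 2, x = 0 ∨ x = 1 by decide) i with rfl | rfl <;>
      rcases (show ∀ x : ZMod 2, x = 0 ∨ x = 1 by decide) j with rfl | rfl <;>
      simp [Hm, Matrix.one_apply, Matrix.smul_apply, Matrix.of_apply,
        show (0 : ZMod 2) ≠ 1 by decide, show ¬(1 : ZMod 2) = 0 by decide] <;>
      norm_num
  · ext i j
    rw [Matrix.mul_apply, univ_zmod2, Finset.sum_insert (by decide), Finset.sum_singleton]
    simp only [Matrix.mul_diagonal]
    rcases (show ∀ x : ZMod 2, x = 0 ∨ x = 1 by decide) i with rfl | rfl <;>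
      rcases (show ∀ x : ZMod 2, x = 0 ∨ x = 1 by decide) j with rfl | rfl <;>
      simp [Hm, A2, Matrix.smul_apply, Matrix.of_apply,
        show (0 : ZMod 2) ≠ 1 by decide, show ¬(1 : ZMod 2) = 0 by decide] <;>
      norm_num
  · intro x
    by_cases hx : x = 1
    · refine ⟨-1, ⟨-1, by ring⟩, ?_⟩
      show (if x = 1 then (-1 : ℂ) else 1) = ((-1 : ℤ) : ℂ)
      rw [if_pos hx]; norm_num
    · refine ⟨1, odd_one, ?_⟩
      show (if x = 1 then (-1 : ℂ) else 1) = ((1 : ℤ) : ℂ)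
      rw [if_neg hx]; norm_num

end A2Diag

/-- for nonzero `a ∈ (ℤ/2)^d`, nonzero `y ∈ (ℤ/2)^r`, `n_i ≥ 3` with
`h = gcd(n_1,…,n_d)` even, `exp(-πi·B) = -I` for `B = M_a ⊗ M_y`. -/

theorem stmt10 (d r : ℕ) (hd : 0 < d) (n : Fin d → ℕ) (hn : ∀ i, 3 ≤ n i)
    (heven : Even (Finset.univ.gcd n))
    (a : Fin d → ZMod 2) (ha : a ≠ 0) (y : Fin r → ZMod 2) (hy : y ≠ 0) :
    NormedSpace.exp ((-Complex.I * ((Real.pi : ℝ) : ℂ)) •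
        ((compKron n a) ⊗ₖ (cube y))) = -1 := by
  have hev : ∀ i, Even (n i) := by
    intro i
    obtain ⟨c, hc⟩ := Finset.gcd_dvd (f := n) (Finset.mem_univ i)
    rw [hc]
    exact heven.mul_right c
  have h1 : HasOddDiag (compKron n a) := by
    have he : compKron n a = gk (fun i => if a i = 1 then Kadj (n i) else 1) := rfl
    rw [he]
    refine hasOddDiag_gk _ fun i => ?_
    by_cases hai : a i = 1
    · rw [if_pos hai]; exact hasOddDiag_Kadj (by have := hn i; omega) (hev i)
    · rw [if_neg hai]; exact hasOddDiag_one
  have h2 : HasOddDiag (cube y) := by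
    have he : cube y = gk (fun j : Fin r => if y j = 1 then A2 else 1) := rfl
    rw [he]
    refine hasOddDiag_gk _ fun j => ?_
    by_cases hyj : y j = 1
    · rw [if_pos hyj]; exact hasOddDiag_A2
    · rw [if_neg hyj]; exact hasOddDiag_one
  exact exp_eq_neg_one_of_hasOddDiag _ (hasOddDiag_kron h1 h2)
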